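/- Let d ≥ 1, let Ω ⊆ ℝ^d be open and convex, and let K₁, …, K_N be finitely many closed convex subsets of ℝ^d with Ω ⊆ K₁ ∪ ⋯ ∪ K_N. Let f : Ω → ℝ be continuously differentiable on Ω and suppose that for each i the restriction of f to Ω ∩ K_i is convex (f is piecewise convex). Then f is convex on Ω. -/

import Mathlib

/-- 1-D version: a differentiable function with continuous derivative on a
neighborhood of `[0,1]`, convex on each member of a finite cover of `[0,1]` by
closed convex sets, is convex on `[0,1]`. -/
theorem aux_one_dim (g : ℝ → ℝ) (U : Set ℝ) (hU : IsOpen U) (hIU : Set.Icc (0:ℝ) 1 ⊆ U)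
    (hdiff : ∀ t ∈ U, DifferentiableAt ℝ g t)
    (hcont : ContinuousOn (deriv g) U)
    (M : ℕ) (C : Fin M → Set ℝ) (hCc : ∀ i, IsClosed (C i)) (hCconv : ∀ i, Convex ℝ (C i))
    (hCcover : Set.Icc (0:ℝ) 1 ⊆ ⋃ i, C i) (hCsub : ∀ i, C i ⊆ Set.Icc (0:ℝ) 1)
    (hg : ∀ i, ConvexOn ℝ (C i) g) : ConvexOn ℝ (Set.Icc (0:ℝ) 1) g := by
  -- the derivative is monotone on each piece
  have step : ∀ i, MonotoneOn (deriv g) (C i) := by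
    intro i a ha b hb hab
    rcases eq_or_lt_of_le hab with rfl | h
    · exact le_refl _
    · calc deriv g a ≤ slope g a b :=
            (hg i).deriv_le_slope ha hb h (hdiff _ (hIU (hCsub i ha)))
        _ ≤ deriv g b := (hg i).slope_le_deriv ha hb h (hdiff _ (hIU (hCsub i hb)))
  -- the derivative is monotone on [0,1]
  have mono : MonotoneOn (deriv g) (Set.Icc (0:ℝ) 1) := by
    intro s hs t ht hst
    set A : Set ℝ := Set.Icc s t ∩ deriv g ⁻¹' Set.Ici (deriv g s) with hA
    have hIst : Set.Icc s t ⊆ Set.Icc (0:ℝ) 1 := Set.Icc_subset_Icc hs.1 ht.2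
    have hAclosed : IsClosed A :=
      ContinuousOn.preimage_isClosed_of_isClosed
        (hcont.mono (hIst.trans hIU)) isClosed_Icc isClosed_Ici
    have hsA : s ∈ A := ⟨⟨le_refl s, hst⟩, Set.mem_preimage.2 (Set.mem_Ici.2 le_rfl)⟩
    have hAbdd : BddAbove A := ⟨t, fun u hu => hu.1.2⟩
    set c := sSup A with hc
    have hcA : c ∈ A := hAclosed.csSup_mem ⟨s, hsA⟩ hAbdd
    have hsc : s ≤ c := le_csSup hAbdd hsA
    have hct : c ≤ t := hcA.1.2
    have hcI : c ∈ Set.Icc (0:ℝ) 1 := hIst hcA.1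
    have hceq : c = t := by
      by_contra hne
      have hclt : c < t := lt_of_le_of_ne hct hne
      -- the union of the pieces not containing `c` is closed and misses `c`
      set F : Set ℝ := ⋃ i ∈ {i : Fin M | c ∉ C i}, C i with hF
      have hFclosed : IsClosed F :=
        (Set.toFinite _).isClosed_biUnion (fun i _ => hCc i)
      have hcF : c ∉ F := by
        intro hcF
        rcases Set.mem_iUnion₂.1 hcF with ⟨i, hi, hci⟩
        exact hi hci
      obtain ⟨ε, hε, hball⟩ : ∃ ε > 0, Metric.ball c ε ⊆ Fᶜ :=
        Metric.isOpen_iff.1 hFclosed.isOpen_compl c hcF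
      set v := min (c + ε / 2) t with hv
      have hcv : c < v := lt_min (by linarith) hclt
      have hvt : v ≤ t := min_le_right _ _
      have hvI : v ∈ Set.Icc (0:ℝ) 1 := ⟨le_trans hcI.1 hcv.le, le_trans hvt ht.2⟩
      have hvball : v ∈ Metric.ball c ε := by
        rw [Metric.mem_ball, Real.dist_eq, abs_of_pos (by linarith)]
        have : v ≤ c + ε / 2 := min_le_left _ _
        linarith
      obtain ⟨i, hvi⟩ : ∃ i, v ∈ C i := Set.mem_iUnion.1 (hCcover hvI)
      have hci : c ∈ C i := by
        by_contra hci
        exact (hball hvball) (Set.mem_biUnion hci hvi)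
      have hvA : v ∈ A := by
        refine ⟨⟨le_trans hsc hcv.le, hvt⟩, ?_⟩
        have h1 : deriv g c ≤ deriv g v := step i hci hvi hcv.le
        exact le_trans hcA.2 h1
      exact absurd (le_csSup hAbdd hvA) (not_le.2 hcv)
    have := hcA.2
    rwa [hceq] at this
  -- conclude convexity from monotonicity of the derivative
  refine MonotoneOn.convexOn_of_deriv (convex_Icc 0 1) ?_ ?_ ?_
  · exact fun t ht => ((hdiff t (hIU ht)).continuousAt).continuousWithinAt
  · exact fun t ht => ((hdiff t (hIU (interior_subset ht))).differentiableWithinAt)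
  · exact mono.mono interior_subset

/-- A `C¹` function on an open convex domain which is convex on each member of
a finite cover of the domain by closed convex sets is convex on the whole
domain. -/
theorem piecewise_convex_C1_is_convex (d N : ℕ) (hd : 1 ≤ d)
    (Ω : Set (EuclideanSpace ℝ (Fin d))) (hΩopen : IsOpen Ω) (hΩconv : Convex ℝ Ω)
    (K : Fin N → Set (EuclideanSpace ℝ (Fin d)))
    (hKclosed : ∀ i, IsClosed (K i)) (hKconv : ∀ i, Convex ℝ (K i))
    (hcover : Ω ⊆ ⋃ i, K i)
    (f : EuclideanSpace ℝ (Fin d) → ℝ) (hf : ContDiffOn ℝ 1 f Ω)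
    (hconv : ∀ i, ConvexOn ℝ (Ω ∩ K i) f) :
    ConvexOn ℝ Ω f := by
  refine ⟨hΩconv, ?_⟩
  intro x hx y hy a b ha hb hab
  set φ : ℝ →ᵃ[ℝ] EuclideanSpace ℝ (Fin d) := AffineMap.lineMap x y with hφ
  have hφcont : Continuous φ := AffineMap.lineMap_continuous
  have hseg : ∀ t ∈ Set.Icc (0:ℝ) 1, φ t ∈ Ω := fun t ht => hΩconv.lineMap_mem hx hy ht
  set g : ℝ → ℝ := f ∘ φ with hg
  set U : Set ℝ := φ ⁻¹' Ω with hU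
  have hUopen : IsOpen U := hΩopen.preimage hφcont
  have hIU : Set.Icc (0:ℝ) 1 ⊆ U := fun t ht => hseg t ht
  -- f is differentiable at each point of Ω
  have hfd : ∀ z ∈ Ω, DifferentiableAt ℝ f z := fun z hz =>
    (hf.differentiableOn one_ne_zero).differentiableAt (hΩopen.mem_nhds hz)
  -- derivative of φ
  have hφd : ∀ t : ℝ, HasDerivAt (fun s : ℝ => φ s) (y - x) t := by
    intro t
    have : ∀ s : ℝ, φ s = s • (y - x) + x := by
      intro s
      simp [hφ, AffineMap.lineMap_apply]
    simp only [this]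
    simpa using ((hasDerivAt_id t).smul_const (y - x)).add_const x
  have hgd : ∀ t ∈ U, HasDerivAt g ((fderiv ℝ f (φ t)) (y - x)) t := by
    intro t ht
    exact ((hfd _ ht).hasFDerivAt).comp_hasDerivAt t (hφd t)
  have hdiff : ∀ t ∈ U, DifferentiableAt ℝ g t := fun t ht => (hgd t ht).differentiableAt
  have hderiv_eq : ∀ t ∈ U, deriv g t = (fderiv ℝ f (φ t)) (y - x) := fun t ht =>
    (hgd t ht).deriv
  have hcont : ContinuousOn (deriv g) U := by
    have h1 : ContinuousOn (fun t => (fderiv ℝ f (φ t)) (y - x)) U := by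
      have h2 : ContinuousOn (fderiv ℝ f) Ω :=
        hf.continuousOn_fderiv_of_isOpen hΩopen le_rfl
      exact ContinuousOn.clm_apply (h2.comp hφcont.continuousOn (fun t ht => ht))
        continuousOn_const
    exact h1.congr hderiv_eq
  -- the pieces
  set C : Fin N → Set ℝ := fun i => Set.Icc (0:ℝ) 1 ∩ φ ⁻¹' (K i) with hC
  have hCc : ∀ i, IsClosed (C i) := fun i =>
    isClosed_Icc.inter ((hKclosed i).preimage hφcont)
  have hCconv : ∀ i, Convex ℝ (C i) := fun i =>
    (convex_Icc 0 1).inter ((hKconv i).affine_preimage φ)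
  have hCcover : Set.Icc (0:ℝ) 1 ⊆ ⋃ i, C i := by
    intro t ht
    obtain ⟨i, hi⟩ : ∃ i, φ t ∈ K i := Set.mem_iUnion.1 (hcover (hseg t ht))
    exact Set.mem_iUnion.2 ⟨i, ht, hi⟩
  have hCsub : ∀ i, C i ⊆ Set.Icc (0:ℝ) 1 := fun i => Set.inter_subset_left
  have hgc : ∀ i, ConvexOn ℝ (C i) g := by
    intro i
    refine ((hconv i).comp_affineMap φ).subset ?_ (hCconv i)
    intro t ht
    exact ⟨hseg t ht.1, ht.2⟩
  -- apply the 1-D result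
  have key : ConvexOn ℝ (Set.Icc (0:ℝ) 1) g :=
    aux_one_dim g U hUopen hIU hdiff hcont N C hCc hCconv hCcover hCsub hgc
  have h01 : (a : ℝ) • (0:ℝ) + b • 1 = b := by simp
  have := key.2 (Set.left_mem_Icc.2 zero_le_one) (Set.right_mem_Icc.2 zero_le_one) ha hb hab
  rw [h01] at this
  have hval : g b = f (a • x + b • y) := by
    have hb' : a • x + b • y = φ b := by
      have haeq : a = 1 - b := by linarith
      simp only [hφ, AffineMap.lineMap_apply, haeq, vsub_eq_sub, vadd_eq_add]
      module
    rw [hb']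
    rfl
  have h0 : g 0 = f x := by simp [hg, hφ]
  have h1 : g 1 = f y := by simp [hg, hφ]
  rw [hval, h0, h1] at this
  exact this
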